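/- In the reduction trace from Unary 3-Partition, any legal schedule respecting program order must schedule reads and writes alternately: since the number of reads in P₀ equals the total number of writes in all other processes, each write is the dictating write of exactly one read, and consecutive reads of the same value must consume distinct writes of that value. -/

import Mathlib

/-- An operation: a read or write on variable `var` with value `val` (the issuing
process is given by the position of the operation in the trace). -/
structure Op where
  isRead : Bool
  var : ℕ
  val : ℕ
deriving DecidableEq

/-- Write of value `v` to the single shared variable `x` (variable `0`). -/
def Wr (v : ℕ) : Op := ⟨false, 0, v⟩

/-- Read of value `v` from the single shared variable `x` (variable `0`). -/
def Rd (v : ℕ) : Op := ⟨true, 0, v⟩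

/-- Values `a, a', b, b', c, c'` are the six distinct integers `1,…,6`. -/
def va : ℕ := 1
def va' : ℕ := 2
def vb : ℕ := 3
def vb' : ℕ := 4
def vc : ℕ := 5
def vc' : ℕ := 6

/-- Open subsequence `Rxa Rxa' Rxa Rxa' Rxa Rxa'`. -/
def openSeq : List Op := [Rd va, Rd va', Rd va, Rd va', Rd va, Rd va']

/-- Sum subsequence `(Rxb Rxb')^B`. -/
def sumSeq (B : ℕ) : List Op := (List.replicate B [Rd vb, Rd vb']).flatten

/-- Close subsequence `Rxc Rxc' Rxc Rxc' Rxc Rxc'`. -/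
def closeSeq : List Op := [Rd vc, Rd vc', Rd vc, Rd vc', Rd vc, Rd vc']

/-- The read-only process `P₀`: `m` slot sequences. -/
def P0 (m B : ℕ) : List Op := (List.replicate m (openSeq ++ sumSeq B ++ closeSeq)).flatten

/-- Process `P_{aᵢ}`: `Wxa'`, then `s(aᵢ)` copies of `Wxb'`, then `Wxc'`. -/
def Pa (sz : ℕ) : List Op := Wr va' :: (List.replicate sz (Wr vb') ++ [Wr vc'])

/-- The trace of the reduction from Unary 3-Partition: `P₀`, the processes
`P_{a₁},…,P_{a_{3m}}`, and the auxiliary processes `P_{c₁} = (Wxa)^{3m}`,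
`P_{c₂} = (Wxb)^{mB}`, `P_{c₃} = (Wxc)^{3m}`. -/
def reductionTrace (m B : ℕ) (s : Fin (3 * m) → ℕ) : List (List Op) :=
  P0 m B :: (List.ofFn (fun i => Pa (s i)) ++
    [List.replicate (3 * m) (Wr va), List.replicate (m * B) (Wr vb),
     List.replicate (3 * m) (Wr vc)])

/-- A position of an operation in a trace: a process index and an index in that
process's sequence. -/
def Pos (procs : List (List Op)) : Type := Σ i : Fin procs.length, Fin ((procs.get i).length)

/-- The operation at a position of the trace. -/
def opAt {procs : List (List Op)} (p : Pos procs) : Op := (procs.get p.1).get p.2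

/-- `σ` numbers the operations of the trace as a legal schedule respecting program
order: it is injective, operations of the same process keep their order, and every
read reads the value of the latest preceding write on the same variable. -/
def LegalSched (procs : List (List Op)) (σ : Pos procs → ℕ) : Prop :=
  Function.Injective σ ∧
  (∀ p q : Pos procs, p.1.val = q.1.val → p.2.val < q.2.val → σ p < σ q) ∧
  (∀ p : Pos procs, (opAt p).isRead = true →
    ∃ q : Pos procs, (opAt q).isRead = false ∧ σ q < σ p ∧
      (opAt q).var = (opAt p).var ∧ (opAt q).val = (opAt p).val ∧
      ∀ q' : Pos procs, (opAt q').isRead = false → (opAt q').var = (opAt p).var →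
        σ q < σ q' → ¬ σ q' < σ p)

/-- A solution of the 3-Partition instance: an assignment of the `3m` elements to `m`
triples, each summing to `B`. -/
def ThreePartSol (m B : ℕ) (s : Fin (3 * m) → ℕ) : Prop :=
  ∃ f : Fin (3 * m) → Fin m,
    (∀ j : Fin m, (Finset.univ.filter (fun i => f i = j)).card = 3) ∧
    (∀ j : Fin m, ∑ i ∈ Finset.univ.filter (fun i => f i = j), s i = B)

namespace VpcAux

def NeVal (o o' : Op) : Prop := o.val ≠ o'.val

lemma sumSeq_succ (B : ℕ) : sumSeq (B+1) = Rd vb :: Rd vb' :: sumSeq B := by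
  simp [sumSeq, List.replicate_succ]

lemma chain'_cons_sumSeq : ∀ B, List.Chain' NeVal (Rd vb' :: sumSeq B)
  | 0 => by simp [sumSeq, NeVal, List.Chain']
  | B+1 => by
      rw [sumSeq_succ]
      refine List.isChain_cons_cons.mpr ⟨?_, List.isChain_cons_cons.mpr ⟨?_, chain'_cons_sumSeq B⟩⟩ <;>
        simp [NeVal, Rd, vb, vb']

lemma getLast?_cons_sumSeq : ∀ B, (Rd vb' :: sumSeq B).getLast? = some (Rd vb')
  | 0 => by simp [sumSeq]
  | B+1 => by
      rw [sumSeq_succ, List.getLast?_cons_cons, List.getLast?_cons_cons]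
      exact getLast?_cons_sumSeq B

lemma chain'_block (B : ℕ) (hB : 0 < B) :
    List.Chain' NeVal (openSeq ++ sumSeq B ++ closeSeq) := by
  obtain ⟨B', rfl⟩ : ∃ B', B = B' + 1 := ⟨B - 1, by omega⟩
  simp only [List.Chain']
  rw [List.isChain_append, List.isChain_append]
  refine ⟨⟨?_, ?_, ?_⟩, ?_, ?_⟩
  · simp [openSeq, NeVal, Rd, va, va', List.isChain_cons_cons]
  · rw [sumSeq_succ]
    refine List.isChain_cons_cons.mpr ⟨?_, chain'_cons_sumSeq B'⟩
    simp [NeVal, Rd, vb, vb']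
  · rw [sumSeq_succ]
    simp [openSeq, NeVal, Rd, vb, va']
  · simp [closeSeq, NeVal, Rd, vc, vc', List.isChain_cons_cons]
  · have h := getLast?_cons_sumSeq B'
    rw [sumSeq_succ]
    simp only [openSeq, List.cons_append, List.nil_append, List.getLast?_cons_cons, h]
    simp [closeSeq, NeVal, Rd, vb', vc]

lemma P0_succ (m B : ℕ) : P0 (m+1) B = (openSeq ++ sumSeq B ++ closeSeq) ++ P0 m B := by
  simp [P0, List.replicate_succ]

lemma head?_P0 : ∀ m B, ∀ y ∈ (P0 m B).head?, y = Rd va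
  | 0, B => by simp [P0]
  | m+1, B => by
      rw [P0_succ]
      simp [openSeq]

lemma getLast?_block (B : ℕ) :
    (openSeq ++ sumSeq B ++ closeSeq).getLast? = some (Rd vc') := by
  rw [List.getLast?_append_of_ne_nil _ (by simp [closeSeq])]
  simp [closeSeq]

lemma chain'_P0 (B : ℕ) (hB : 0 < B) : ∀ m, List.Chain' NeVal (P0 m B)
  | 0 => by simp [P0, List.Chain']
  | m+1 => by
      simp only [P0_succ, List.Chain']
      rw [List.isChain_append]
      refine ⟨chain'_block B hB, chain'_P0 B hB m, ?_⟩
      rw [getLast?_block]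
      intro x hx y hy
      have hy' := head?_P0 m B y hy
      simp only [Option.mem_def, Option.some.injEq] at hx
      subst hx; subst hy'
      simp [NeVal, Rd, va, vc']

lemma mem_P0 (m B : ℕ) : ∀ o ∈ P0 m B, o.isRead = true ∧ o.var = 0 := by
  intro o ho
  simp only [P0, List.mem_flatten, List.mem_replicate] at ho
  obtain ⟨l, ⟨-, rfl⟩, ho⟩ := ho
  rw [List.mem_append, List.mem_append] at ho
  rcases ho with (h | h) | h
  · simp only [openSeq] at h
    fin_cases h <;> simp [Rd]
  · simp only [sumSeq, List.mem_flatten, List.mem_replicate] at h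
    obtain ⟨l, ⟨-, rfl⟩, h⟩ := h
    fin_cases h <;> simp [Rd]
  · simp only [closeSeq] at h
    fin_cases h <;> simp [Rd]

lemma mem_tail (m B : ℕ) (s : Fin (3*m) → ℕ) :
    ∀ l ∈ (List.ofFn (fun i => Pa (s i)) ++
      [List.replicate (3 * m) (Wr va), List.replicate (m * B) (Wr vb),
       List.replicate (3 * m) (Wr vc)]), ∀ o ∈ l, o.isRead = false ∧ o.var = 0 := by
  intro l hl o ho
  simp only [List.mem_append, List.mem_ofFn, List.mem_cons, List.not_mem_nil, or_false,
    Set.mem_range] at hl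
  rcases hl with ⟨i, rfl⟩ | rfl | rfl | rfl
  · simp only [Pa, List.mem_cons, List.mem_append, List.mem_replicate,
      List.mem_singleton] at ho
    rcases ho with rfl | ⟨-, rfl⟩ | rfl | h
    · simp [Wr]
    · simp [Wr]
    · simp [Wr]
    · exact absurd h List.not_mem_nil
  all_goals
    rw [List.eq_of_mem_replicate ho]
    simp [Wr]

lemma opAt_spec (m B : ℕ) (s : Fin (3*m) → ℕ) (p : Pos (reductionTrace m B s)) :
    ((opAt p).isRead = true ↔ p.1.val = 0) ∧ (opAt p).var = 0 := by
  obtain ⟨⟨i, hi⟩, j⟩ := p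
  cases i with
  | zero =>
    have hmem : opAt (⟨⟨0, hi⟩, j⟩ : Pos (reductionTrace m B s)) ∈ P0 m B :=
      List.get_mem _ ⟨j.1, j.2⟩
    have h := mem_P0 m B _ hmem
    exact ⟨iff_of_true h.1 rfl, h.2⟩
  | succ k =>
    have hk : k < (List.ofFn (fun i => Pa (s i)) ++
      [List.replicate (3 * m) (Wr va), List.replicate (m * B) (Wr vb),
       List.replicate (3 * m) (Wr vc)]).length := by
      simp [reductionTrace] at hi ⊢; omega
    have hmem : opAt (⟨⟨k+1, hi⟩, j⟩ : Pos (reductionTrace m B s)) ∈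
        (List.ofFn (fun i => Pa (s i)) ++
          [List.replicate (3 * m) (Wr va), List.replicate (m * B) (Wr vb),
           List.replicate (3 * m) (Wr vc)]).get ⟨k, hk⟩ :=
      List.get_mem _ ⟨j.1, j.2⟩
    have h := mem_tail m B s _ (List.get_mem _ ⟨k, hk⟩) _ hmem
    exact ⟨iff_of_false (by simp [h.1]) (by simp), h.2⟩

lemma Pos_ext {procs : List (List Op)} {p q : Pos procs}
    (h1 : p.1 = q.1) (h2 : p.2.val = q.2.val) : p = q := by
  obtain ⟨i, j⟩ := p; obtain ⟨i', j'⟩ := q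
  cases h1
  exact congrArg _ (Fin.ext h2)

instance instFintypePos (procs : List (List Op)) : Fintype (Pos procs) := by
  unfold Pos; infer_instance

lemma card_Pos (procs : List (List Op)) :
    Fintype.card (Pos procs) = (procs.map List.length).sum := by
  have h1 : Fintype.card (Pos procs) =
      ∑ i : Fin procs.length, (procs.get i).length := by
    show Fintype.card (Σ i : Fin procs.length, Fin ((procs.get i).length)) = _
    rw [Fintype.card_sigma]
    simp
  rw [h1, ← List.sum_ofFn]
  congr 1
  conv_rhs => rw [← List.ofFn_get procs]
  rw [List.map_ofFn]
  rfl

lemma length_P0 (m B : ℕ) : (P0 m B).length = m * (2 * B + 12) := by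
  simp [P0, List.length_flatten, List.map_replicate, List.sum_replicate, openSeq, closeSeq,
    sumSeq, smul_eq_mul]
  ring_nf
  tauto

lemma length_Pa (sz : ℕ) : (Pa sz).length = sz + 2 := by
  simp [Pa]

lemma sum_lengths (m B : ℕ) (s : Fin (3*m) → ℕ) (hsum : ∑ i, s i = m * B) :
    ((reductionTrace m B s).map List.length).sum = 2 * (P0 m B).length := by
  simp only [reductionTrace, List.map_cons, List.map_append, List.map_ofFn, List.sum_cons,
    List.sum_append, List.sum_ofFn, Function.comp, length_Pa, List.length_replicate,
    List.map_nil, List.sum_nil, length_P0]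
  have h2 : ∑ i : Fin (3*m), (s i + 2) = m * B + 6 * m := by
    rw [Finset.sum_add_distrib, hsum]
    simp [Finset.card_univ, mul_comm]
    ring
  rw [h2]
  ring

lemma card_reads (m B : ℕ) (s : Fin (3*m) → ℕ) :
    Fintype.card {p : Pos (reductionTrace m B s) // (opAt p).isRead = true}
      = (P0 m B).length := by
  have e : {p : Pos (reductionTrace m B s) // (opAt p).isRead = true}
      ≃ Fin (P0 m B).length :=
    { toFun := fun r => Fin.cast (by
        have h : r.1.1 = (⟨0, by simp [reductionTrace]⟩ : Fin (reductionTrace m B s).length) :=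
          Fin.ext ((opAt_spec m B s r.1).1.mp r.2)
        rw [h]; rfl) r.1.2
      invFun := fun j =>
        ⟨⟨⟨0, by simp [reductionTrace]⟩, j⟩, (opAt_spec m B s _).1.mpr rfl⟩
      left_inv := by
        rintro ⟨⟨i, j⟩, hr⟩
        have h : i = (⟨0, by simp [reductionTrace]⟩ : Fin (reductionTrace m B s).length) :=
          Fin.ext ((opAt_spec m B s ⟨i, j⟩).1.mp hr)
        subst h
        rfl
      right_inv := fun j => rfl }
  rw [Fintype.card_congr e, Fintype.card_fin]

lemma card_writes (m B : ℕ) (s : Fin (3*m) → ℕ) (hsum : ∑ i, s i = m * B) :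
    Fintype.card {q : Pos (reductionTrace m B s) // (opAt q).isRead = false}
      = (P0 m B).length := by
  have e : {q : Pos (reductionTrace m B s) // (opAt q).isRead = false}
      ≃ {q : Pos (reductionTrace m B s) // ¬ ((opAt q).isRead = true)} :=
    Equiv.subtypeEquivRight (by intro a; simp)
  rw [Fintype.card_congr e, Fintype.card_subtype_compl, card_Pos,
    sum_lengths m B s hsum, card_reads]
  omega

lemma adj_val_ne (m B : ℕ) (s : Fin (3*m) → ℕ) (hB : 0 < B)
    (p p'' : Pos (reductionTrace m B s))
    (h0 : p.1.val = 0) (h1 : p''.1 = p.1) (h2 : p''.2.val = p.2.val + 1) :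
    (opAt p).val ≠ (opAt p'').val := by
  obtain ⟨⟨i, hi⟩, j⟩ := p
  obtain ⟨i2, k⟩ := p''
  simp only at h0
  subst h0
  simp only at h1
  subst h1
  simp only at h2
  have hk : j.val + 1 < (P0 m B).length := by
    have h := k.isLt
    rw [h2] at h
    exact h
  have hc := (List.isChain_iff_getElem.mp (chain'_P0 B hB m)) j.val (by omega)
  have hk' : k = (⟨j.val + 1, hk⟩ : Fin (P0 m B).length) := Fin.ext h2
  have e1 : opAt (⟨⟨0, hi⟩, j⟩ : Pos (reductionTrace m B s))
      = (P0 m B).get ⟨j.val, by omega⟩ := rfl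
  have e2 : opAt (⟨⟨0, hi⟩, k⟩ : Pos (reductionTrace m B s))
      = (P0 m B).get ⟨j.val + 1, hk⟩ := by rw [hk']; rfl
  rw [e1, e2]
  exact hc

end VpcAux
open VpcAux

/-- In any legal program-order-respecting schedule of the reduction trace, reads and
writes must alternate: each write is the dictating write of exactly one read, i.e. for
every write position `q` there is exactly one read position `p` such that `q` is the
latest write preceding `p` in the schedule (its value then matches by legality). -/
theorem stmt11 (m B : ℕ) (s : Fin (3 * m) → ℕ) (hm : 0 < m)
    (hsize : ∀ i, B < 4 * s i ∧ 2 * s i < B)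
    (hsum : ∑ i, s i = m * B)
    (σ : Pos (reductionTrace m B s) → ℕ)
    (hleg : LegalSched (reductionTrace m B s) σ) :
    ∀ q : Pos (reductionTrace m B s), (opAt q).isRead = false →
      ∃! p : Pos (reductionTrace m B s), (opAt p).isRead = true ∧ σ q < σ p ∧
        ∀ q' : Pos (reductionTrace m B s), (opAt q').isRead = false →
          σ q' < σ p → σ q' ≤ σ q := by
  obtain ⟨hinj, hpo, hread⟩ := hleg
  have hB : 0 < B := by
    have h := hsize ⟨0, by omega⟩
    omega
  have hvar : ∀ p : Pos (reductionTrace m B s), (opAt p).var = 0 :=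
    fun p => (opAt_spec m B s p).2
  have hr0 : ∀ p : Pos (reductionTrace m B s), (opAt p).isRead = true → p.1.val = 0 :=
    fun p hp => (opAt_spec m B s p).1.mp hp
  -- no single write can dictate two distinct reads
  have key : ∀ p p' q : Pos (reductionTrace m B s),
      (opAt p).isRead = true → (opAt p').isRead = true →
      (opAt q).isRead = false → σ q < σ p → σ q < σ p' →
      (∀ q', (opAt q').isRead = false → σ q < σ q' → ¬ σ q' < σ p) →
      (∀ q', (opAt q').isRead = false → σ q < σ q' → ¬ σ q' < σ p') →
      (opAt q).val = (opAt p).val → (opAt q).val = (opAt p').val →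
      σ p < σ p' → False := by
    intro p p' q hp hp' hqw hqp hqp' hmaxp hmaxp' hvp hvp' hlt
    have h1 : p.1 = p'.1 := Fin.ext (by rw [hr0 p hp, hr0 p' hp'])
    have hjj : p.2.val < p'.2.val := by
      rcases Nat.lt_trichotomy p.2.val p'.2.val with h | h | h
      · exact h
      · exact absurd (Pos_ext h1 h ▸ hlt) (lt_irrefl _)
      · exact absurd (hpo p' p (congrArg Fin.val h1).symm h) (by omega)
    have hlen : ((reductionTrace m B s).get p.1).length
        = ((reductionTrace m B s).get p'.1).length := by rw [h1]
    have hlt2 : p.2.val + 1 < ((reductionTrace m B s).get p.1).length := by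
      have h := p'.2.isLt
      omega
    set p'' : Pos (reductionTrace m B s) := ⟨p.1, ⟨p.2.val + 1, hlt2⟩⟩ with hp''def
    have hp'' : (opAt p'').isRead = true :=
      (opAt_spec m B s p'').1.mpr (hr0 p hp)
    obtain ⟨q'', hq''w, hq''lt, -, hq''val, hq''max⟩ := hread p'' hp''
    have hσ1 : σ p < σ p'' := hpo p p'' rfl (by rw [hp''def]; exact Nat.lt_succ_self _)
    have hσ2 : σ p'' ≤ σ p' := by
      rcases Nat.lt_trichotomy p''.2.val p'.2.val with h | h | h
      · exact le_of_lt (hpo p'' p' (congrArg Fin.val (hp''def ▸ h1)) h)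
      · exact le_of_eq (congrArg σ (Pos_ext (hp''def ▸ h1) h))
      · exfalso
        have : p''.2.val = p.2.val + 1 := by rw [hp''def]
        omega
    have hqq : q'' = q := by
      rcases Nat.lt_trichotomy (σ q'') (σ q) with h | h | h
      · exact absurd (by omega : σ q < σ p'')
          (hq''max q hqw (by rw [hvar, hvar]) h)
      · exact hinj h
      · exact absurd (by omega : σ q'' < σ p') (hmaxp' q'' hq''w h)
    have hval : (opAt p).val = (opAt p'').val := by
      rw [← hvp, ← hq''val, hqq]
    exact adj_val_ne m B s hB p p'' (hr0 p hp) rfl rfl hval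
  -- the dictating-write map from reads to writes
  have dspec : ∀ r : {p : Pos (reductionTrace m B s) // (opAt p).isRead = true}, (opAt (hread r.1 r.2).choose).isRead = false ∧
      σ (hread r.1 r.2).choose < σ r.1 ∧
      (opAt (hread r.1 r.2).choose).val = (opAt r.1).val ∧
      ∀ q', (opAt q').isRead = false → σ (hread r.1 r.2).choose < σ q' →
        ¬ σ q' < σ r.1 := by
    intro r
    obtain ⟨h1, h2, -, h4, h5⟩ := (hread r.1 r.2).choose_spec
    exact ⟨h1, h2, h4, fun q' hq' hlt => h5 q' hq' (by rw [hvar, hvar]) hlt⟩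
  set d : {p : Pos (reductionTrace m B s) // (opAt p).isRead = true} →
      {q : Pos (reductionTrace m B s) // (opAt q).isRead = false} :=
    fun r => ⟨(hread r.1 r.2).choose, (dspec r).1⟩ with hd
  have hdinj : Function.Injective d := by
    intro r r' heq
    have heq' : (hread r.1 r.2).choose = (hread r'.1 r'.2).choose :=
      congrArg Subtype.val heq
    by_contra hne
    have hσne : σ r.1 ≠ σ r'.1 := by
      intro h
      exact hne (Subtype.ext (hinj h))
    obtain ⟨h1, h2, h3, h4⟩ := dspec r
    obtain ⟨h1', h2', h3', h4'⟩ := dspec r'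
    rcases Nat.lt_trichotomy (σ r.1) (σ r'.1) with h | h | h
    · exact key r.1 r'.1 (hread r.1 r.2).choose r.2 r'.2 h1 h2 (heq' ▸ h2') h4
        (fun q' a b => h4' q' a (heq' ▸ b)) h3 (heq' ▸ h3') h
    · exact hσne h
    · exact key r'.1 r.1 (hread r.1 r.2).choose r'.2 r.2 h1 (heq' ▸ h2') h2
        (fun q' a b => h4' q' a (heq' ▸ b)) h4 (heq' ▸ h3') h3 h
  have hdbij : Function.Bijective d :=
    (Fintype.bijective_iff_injective_and_card d).mpr
      ⟨hdinj, by rw [card_reads m B s, card_writes m B s hsum]⟩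
  intro q0 hq0
  obtain ⟨r, hr⟩ := hdbij.2 ⟨q0, hq0⟩
  have hrq : (hread r.1 r.2).choose = q0 := congrArg Subtype.val hr
  obtain ⟨h1, h2, h3, h4⟩ := dspec r
  rw [hrq] at h2 h3 h4
  refine ⟨r.1, ⟨r.2, h2, ?_⟩, ?_⟩
  · intro q' hq' hlt
    by_contra hle
    exact h4 q' hq' (by omega) hlt
  · rintro p' ⟨hp', hq0p', hmax'⟩
    set r' : {p : Pos (reductionTrace m B s) // (opAt p).isRead = true} := ⟨p', hp'⟩ with hr'
    obtain ⟨g1, g2, g3, g4⟩ := dspec r'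
    have hq'q0 : (hread r'.1 r'.2).choose = q0 := by
      have hle : σ (hread r'.1 r'.2).choose ≤ σ q0 := hmax' _ g1 g2
      rcases Nat.lt_trichotomy (σ (hread r'.1 r'.2).choose) (σ q0) with h | h | h
      · exact absurd hq0p' (g4 q0 hq0 h)
      · exact hinj h
      · omega
    have : d r' = d r := Subtype.ext (hq'q0.trans hrq.symm)
    exact congrArg Subtype.val (hdinj this)
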